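/- Let I = [0,1] with the Euclidean metric, and let Σ be the equations F₀(G(x₀,x₁)) = x₀ and F₁(G(x₀,x₁)) = x₁. For every ε > 0 there exist a binary operation G : I × I → I and continuous unary operations F₀, F₁ : I → I satisfying Σ on I such that the jump χ(G) ≤ ε (the domain I × I carrying the product topology). Consequently μ(I, Σ) = 0, even though I is not compatible with Σ (no continuous injective binary operation exists on I). -/

import Mathlib

open scoped ENNReal

/-- The jump of `f` at `b`: the infimum, over open neighborhoods `U` of `b`,
of the diameter (in `[0,∞]`) of `f '' U`. -/
noncomputable def jumpAt {B A : Type*} [TopologicalSpace B] [PseudoEMetricSpace A]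
    (f : B → A) (b : B) : ℝ≥0∞ :=
  ⨅ (U : Set B) (_ : IsOpen U) (_ : b ∈ U), EMetric.diam (f '' U)

/-- The jump of `f`: the supremum over all points of the jump of `f` there. -/
noncomputable def jump {B A : Type*} [TopologicalSpace B] [PseudoEMetricSpace A]
    (f : B → A) : ℝ≥0∞ :=
  ⨆ b, jumpAt f b

open Metric Set Finset

namespace SFC


/-- even integers -/
def E : Set ℝ := {x | ∃ k : ℤ, x = 2 * k}

lemma E_nonempty : E.Nonempty := ⟨0, 0, by norm_num⟩

/-- the basic period-2 tent-plateau function -/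
noncomputable def p (t : ℝ) : ℝ := max 0 (min 1 (3 * infDist t E - 1))

lemma p_nonneg (t : ℝ) : 0 ≤ p t := le_max_left _ _

lemma p_le_one (t : ℝ) : p t ≤ 1 := max_le (by norm_num) (min_le_left _ _)

lemma continuous_p : Continuous p := by
  unfold p
  exact continuous_const.max (continuous_const.min ((continuous_const.mul (continuous_infDist_pt E)).sub continuous_const))

lemma infDist_E (k : ℤ) (s : ℝ) (h0 : 0 ≤ s) (h1 : s ≤ 1) :
    infDist (2 * k + s) E = s := by
  apply le_antisymm
  · have : dist (2 * (k:ℝ) + s) (2 * k) = s := by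
      rw [Real.dist_eq]; rw [abs_of_nonneg] <;> [ring_nf; linarith]
    calc infDist (2 * (k:ℝ) + s) E ≤ dist (2 * (k:ℝ) + s) (2 * k) :=
          infDist_le_dist_of_mem ⟨k, rfl⟩
      _ = s := this
  · by_contra hc
    push_neg at hc
    obtain ⟨y, ⟨j, rfl⟩, hy⟩ := (infDist_lt_iff E_nonempty).1 hc
    rw [Real.dist_eq] at hy
    rcases le_or_gt j k with h | h
    · have : (j:ℝ) ≤ k := by exact_mod_cast h
      rw [abs_of_nonneg (by linarith)] at hy; linarith
    · have : (k:ℝ) + 1 ≤ j := by exact_mod_cast h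
      rw [abs_of_nonpos (by linarith)] at hy; linarith

lemma p_of_le (k : ℤ) (s : ℝ) (h0 : 0 ≤ s) (h1 : s ≤ 1/3) : p (2 * k + s) = 0 := by
  rw [p, infDist_E k s h0 (by linarith)]
  have : 3 * s - 1 ≤ 0 := by linarith
  rw [max_eq_left]
  exact le_trans (min_le_right _ _) this

lemma p_of_ge (k : ℤ) (s : ℝ) (h0 : 2/3 ≤ s) (h1 : s ≤ 1) : p (2 * k + s) = 1 := by
  rw [p, infDist_E k s (by linarith) h1]
  have : (1:ℝ) ≤ 3 * s - 1 := by linarith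
  rw [min_eq_left this, max_eq_right (by norm_num)]


lemma half_summable : Summable (fun n : ℕ => (1/2:ℝ)^(n+1)) := by
  simpa using (summable_geometric_of_lt_one (by norm_num) (by norm_num : (1/2:ℝ) < 1)).mul_left (1/2:ℝ) |>.congr (fun n => by ring_nf; norm_num)

lemma half_tsum : ∑' n : ℕ, (1/2:ℝ)^(n+1) = 1 := by
  have := tsum_geometric_of_lt_one (by norm_num : (0:ℝ) ≤ 1/2) (by norm_num)
  calc ∑' n : ℕ, (1/2:ℝ)^(n+1) = ∑' n : ℕ, (1/2) * (1/2:ℝ)^n := by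
        exact tsum_congr fun n => by ring
    _ = (1/2) * ∑' n : ℕ, (1/2:ℝ)^n := tsum_mul_left
    _ = 1 := by rw [this]; norm_num

/-- generic Schoenberg-type coordinate series -/
noncomputable def Z (e : ℕ → ℕ) (t : ℝ) : ℝ := ∑' n : ℕ, (1/2:ℝ)^(n+1) * p (3^(e n) * t)

lemma Z_summand_nonneg (e : ℕ → ℕ) (t : ℝ) (n : ℕ) :
    0 ≤ (1/2:ℝ)^(n+1) * p (3^(e n) * t) :=
  mul_nonneg (by positivity) (p_nonneg _)

lemma Z_summand_le (e : ℕ → ℕ) (t : ℝ) (n : ℕ) :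
    (1/2:ℝ)^(n+1) * p (3^(e n) * t) ≤ (1/2:ℝ)^(n+1) := by
  nlinarith [p_le_one (3^(e n) * t), p_nonneg (3^(e n) * t), pow_pos (by norm_num : (0:ℝ) < 1/2) (n+1)]

lemma Z_summable (e : ℕ → ℕ) (t : ℝ) :
    Summable (fun n : ℕ => (1/2:ℝ)^(n+1) * p (3^(e n) * t)) :=
  Summable.of_nonneg_of_le (Z_summand_nonneg e t) (Z_summand_le e t) half_summable

lemma Z_nonneg (e : ℕ → ℕ) (t : ℝ) : 0 ≤ Z e t :=
  tsum_nonneg (Z_summand_nonneg e t)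

lemma Z_le_one (e : ℕ → ℕ) (t : ℝ) : Z e t ≤ 1 := by
  rw [← half_tsum]
  exact Summable.tsum_le_tsum (Z_summand_le e t) (Z_summable e t) half_summable

lemma continuous_Z (e : ℕ → ℕ) : Continuous (Z e) := by
  apply continuous_tsum (u := fun n : ℕ => (1/2:ℝ)^(n+1))
  · exact fun n => continuous_const.mul (continuous_p.comp (continuous_const.mul continuous_id))
  · exact half_summable
  · intro n x
    rw [Real.norm_eq_abs, abs_of_nonneg (Z_summand_nonneg e x n)]
    exact Z_summand_le e x n

lemma p_zero : p 0 = 0 := by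
  have := p_of_le 0 0 le_rfl (by norm_num)
  simpa using this

lemma p_odd_pow (m : ℕ) : p (3^m * 1) = 1 := by
  obtain ⟨k, hk⟩ := Odd.pow (n := m) (⟨1, by norm_num⟩ : Odd (3:ℤ))
  have h3 : ((3:ℤ)^m : ℝ) = 2 * k + 1 := by exact_mod_cast congrArg (fun z : ℤ => (z:ℝ)) hk
  have : (3:ℝ)^m * 1 = 2 * k + 1 := by push_cast at h3 ⊢; linarith
  rw [this]
  exact p_of_ge k 1 (by norm_num) le_rfl

lemma Z_zero (e : ℕ → ℕ) : Z e 0 = 0 := by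
  unfold Z
  simp [p_zero]

lemma Z_one (e : ℕ → ℕ) : Z e 1 = 1 := by
  unfold Z
  calc ∑' n : ℕ, (1/2:ℝ)^(n+1) * p (3^(e n) * 1)
      = ∑' n : ℕ, (1/2:ℝ)^(n+1) := tsum_congr fun n => by rw [p_odd_pow (e n), mul_one]
    _ = 1 := half_tsum


/-- numeric value of a bit -/
def bv (b : Bool) : ℝ := if b then 1 else 0

lemma bv_nonneg (b : Bool) : 0 ≤ bv b := by cases b <;> simp [bv]
lemma bv_le_one (b : Bool) : bv b ≤ 1 := by cases b <;> simp [bv]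

/-! ### greedy binary expansion -/

noncomputable def rem (x : ℝ) : ℕ → ℝ
  | 0 => x
  | n+1 => if 1 ≤ 2 * rem x n then 2 * rem x n - 1 else 2 * rem x n

noncomputable def bdig (x : ℝ) (n : ℕ) : Bool := decide (1 ≤ 2 * rem x n)

lemma rem_mem {x : ℝ} (hx : x ∈ Icc (0:ℝ) 1) (n : ℕ) : rem x n ∈ Icc (0:ℝ) 1 := by
  induction n with
  | zero => exact hx
  | succ n ih =>
    obtain ⟨h0, h1⟩ := ih
    rw [rem]
    split <;> constructor <;> rename_i h <;> simp at * <;> linarith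

lemma bdig_partial (x : ℝ) (m : ℕ) :
    ∑ k ∈ range m, bv (bdig x k) * (1/2:ℝ)^(k+1) = x - rem x m * (1/2)^m := by
  induction m with
  | zero => simp [rem]
  | succ m ih =>
    rw [Finset.sum_range_succ, ih, rem, bdig, bv]
    by_cases h : 1 ≤ 2 * rem x m
    · rw [if_pos h, if_pos (decide_eq_true h)]
      ring
    · rw [if_neg h, if_neg (by simpa using h)]
      ring

lemma bdig_summable (x : ℝ) : Summable (fun k : ℕ => bv (bdig x k) * (1/2:ℝ)^(k+1)) := by
  refine Summable.of_nonneg_of_le (fun k => mul_nonneg (bv_nonneg _) (by positivity))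
    (fun k => ?_) half_summable
  nlinarith [bv_le_one (bdig x k), bv_nonneg (bdig x k), pow_pos (by norm_num : (0:ℝ)<1/2) (k+1)]

lemma bdig_hasSum {x : ℝ} (hx : x ∈ Icc (0:ℝ) 1) :
    HasSum (fun k : ℕ => bv (bdig x k) * (1/2:ℝ)^(k+1)) x := by
  have hs := bdig_summable x
  have h1 : Filter.Tendsto (fun m => ∑ k ∈ range m, bv (bdig x k) * (1/2:ℝ)^(k+1))
      Filter.atTop (nhds (∑' k, bv (bdig x k) * (1/2:ℝ)^(k+1))) := hs.hasSum.tendsto_sum_nat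
  have h2 : Filter.Tendsto (fun m => ∑ k ∈ range m, bv (bdig x k) * (1/2:ℝ)^(k+1))
      Filter.atTop (nhds x) := by
    simp only [bdig_partial]
    have : Filter.Tendsto (fun m : ℕ => rem x m * (1/2:ℝ)^m) Filter.atTop (nhds 0) := by
      refine squeeze_zero (fun m => mul_nonneg (rem_mem hx m).1 (by positivity))
        (fun m => ?_) (tendsto_pow_atTop_nhds_zero_of_lt_one (r := (1/2:ℝ)) (by norm_num) (by norm_num))
      nlinarith [(rem_mem hx m).2, pow_pos (by norm_num : (0:ℝ)<1/2) m, (rem_mem hx m).1]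
    simpa using tendsto_const_nhds.sub this
  exact (Summable.hasSum_iff hs).2 (tendsto_nhds_unique h2 h1).symm

/-! ### the parameter map -/

lemma third_summable : Summable (fun k : ℕ => 2 * (1/3:ℝ)^(k+1)) := by
  exact ((summable_geometric_of_lt_one (by norm_num) (by norm_num : (1/3:ℝ) < 1)).mul_left (2/3:ℝ)).congr
    (fun n => by ring)

lemma third_tsum : ∑' k : ℕ, 2 * (1/3:ℝ)^(k+1) = 1 := by
  have h := tsum_geometric_of_lt_one (by norm_num : (0:ℝ) ≤ 1/3) (by norm_num)
  calc ∑' k : ℕ, 2 * (1/3:ℝ)^(k+1) = ∑' k : ℕ, (2/3) * (1/3:ℝ)^k :=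
        tsum_congr fun n => by ring
    _ = (2/3) * ∑' k : ℕ, (1/3:ℝ)^k := tsum_mul_left
    _ = 1 := by rw [h]; norm_num

noncomputable def par (d : ℕ → Bool) : ℝ := ∑' k : ℕ, 2 * bv (d k) * (1/3:ℝ)^(k+1)

lemma par_summand_nonneg (d : ℕ → Bool) (k : ℕ) : 0 ≤ 2 * bv (d k) * (1/3:ℝ)^(k+1) := by
  have := bv_nonneg (d k); positivity

lemma par_summand_le (d : ℕ → Bool) (k : ℕ) :
    2 * bv (d k) * (1/3:ℝ)^(k+1) ≤ 2 * (1/3:ℝ)^(k+1) := by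
  nlinarith [bv_le_one (d k), bv_nonneg (d k), pow_pos (by norm_num : (0:ℝ)<1/3) (k+1)]

lemma par_summable (d : ℕ → Bool) : Summable (fun k : ℕ => 2 * bv (d k) * (1/3:ℝ)^(k+1)) :=
  Summable.of_nonneg_of_le (par_summand_nonneg d) (par_summand_le d) third_summable

lemma par_nonneg (d : ℕ → Bool) : 0 ≤ par d := tsum_nonneg (par_summand_nonneg d)

lemma par_le_one (d : ℕ → Bool) : par d ≤ 1 := by
  calc par d ≤ ∑' k : ℕ, 2 * (1/3:ℝ)^(k+1) :=
        Summable.tsum_le_tsum (par_summand_le d) (par_summable d) third_summable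
    _ = 1 := third_tsum

lemma par_lt_one {d : ℕ → Bool} (j : ℕ) (hj : d j = false) : par d < 1 := by
  calc par d < ∑' k : ℕ, 2 * (1/3:ℝ)^(k+1) := by
        refine Summable.tsum_lt_tsum (i := j) (par_summand_le d) ?_ (par_summable d) third_summable
        rw [hj]
        simp only [bv, if_false]
        norm_num
    _ = 1 := third_tsum


/-- integer value of a bit -/
def bz (b : Bool) : ℤ := if b then 1 else 0

lemma bz_cast (b : Bool) : ((bz b : ℤ) : ℝ) = bv b := by cases b <;> simp [bz, bv]

lemma ninth_summable : Summable (fun j : ℕ => 2 * (1/3:ℝ)^(j+2)) :=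
  ((summable_geometric_of_lt_one (by norm_num) (by norm_num : (1/3:ℝ) < 1)).mul_left (2/9:ℝ)).congr
    (fun n => by ring)

lemma ninth_tsum : ∑' j : ℕ, 2 * (1/3:ℝ)^(j+2) = 1/3 := by
  have h := tsum_geometric_of_lt_one (by norm_num : (0:ℝ) ≤ 1/3) (by norm_num)
  calc ∑' j : ℕ, 2 * (1/3:ℝ)^(j+2) = ∑' j : ℕ, (2/9) * (1/3:ℝ)^j :=
        tsum_congr fun n => by ring
    _ = (2/9) * ∑' j : ℕ, (1/3:ℝ)^j := tsum_mul_left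
    _ = 1/3 := by rw [h]; norm_num

set_option maxHeartbeats 1000000 in
/-- The key digit-extraction identity. -/
lemma p_par (d : ℕ → Bool) (m : ℕ) : p (3^m * par d) = bv (d m) := by
  -- decompose 3^m * par d
  have hsum : Summable (fun k : ℕ => (3:ℝ)^m * (2 * bv (d k) * (1/3:ℝ)^(k+1))) :=
    (par_summable d).mul_left _
  have hmul : (3:ℝ)^m * par d = ∑' k : ℕ, (3:ℝ)^m * (2 * bv (d k) * (1/3:ℝ)^(k+1)) := by
    rw [par, tsum_mul_left]
  have hsplit := (Summable.sum_add_tsum_nat_add (m+1) hsum).symm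
  -- head sum
  set K : ℤ := ∑ k ∈ range m, bz (d k) * 3^(m-1-k) with hK
  have hhead : ∑ k ∈ range (m+1), (3:ℝ)^m * (2 * bv (d k) * (1/3:ℝ)^(k+1))
      = 2 * (K : ℝ) + 2 * bv (d m) / 3 := by
    rw [Finset.sum_range_succ]
    have h1 : ∑ k ∈ range m, (3:ℝ)^m * (2 * bv (d k) * (1/3:ℝ)^(k+1)) = 2 * (K : ℝ) := by
      rw [hK]
      push_cast
      rw [Finset.mul_sum]
      apply Finset.sum_congr rfl
      intro k hk
      have hkm : k < m := Finset.mem_range.1 hk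
      have hpow : (3:ℝ)^(m-1-k) * 3^(k+1) = 3^m := by
        rw [← pow_add]
        congr 1
        omega
      rw [bz_cast]
      have h13 : (1/3:ℝ)^(k+1) = ((3:ℝ)^(k+1))⁻¹ := by rw [one_div, inv_pow]
      have h3 : (3:ℝ)^(k+1) ≠ 0 := by positivity
      rw [h13, ← hpow]
      field_simp
    have h2 : (3:ℝ)^m * (2 * bv (d m) * (1/3:ℝ)^(m+1)) = 2 * bv (d m) / 3 := by
      have hmm : (3:ℝ)^m * (1/3:ℝ)^m = 1 := by rw [← mul_pow]; norm_num
      have hpow : (3:ℝ)^m * (1/3:ℝ)^(m+1) = 1/3 := by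
        rw [pow_succ]
        nlinarith [hmm]
      calc (3:ℝ)^m * (2 * bv (d m) * (1/3:ℝ)^(m+1))
          = 2 * bv (d m) * ((3:ℝ)^m * (1/3:ℝ)^(m+1)) := by ring
        _ = 2 * bv (d m) / 3 := by rw [hpow]; ring
    rw [h1, h2]
  -- tail sum
  set R : ℝ := ∑' j : ℕ, (3:ℝ)^m * (2 * bv (d (j + (m+1))) * (1/3:ℝ)^(j + (m+1) + 1)) with hR
  have htail_eq : ∀ j : ℕ, (3:ℝ)^m * (2 * bv (d (j + (m+1))) * (1/3:ℝ)^(j + (m+1) + 1))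
      = 2 * bv (d (j + (m+1))) * (1/3:ℝ)^(j+2) := by
    intro j
    have hmm : (3:ℝ)^m * (1/3:ℝ)^m = 1 := by rw [← mul_pow]; norm_num
    have hpow : (3:ℝ)^m * (1/3:ℝ)^(j + (m+1) + 1) = (1/3:ℝ)^(j+2) := by
      calc (3:ℝ)^m * (1/3:ℝ)^(j + (m+1) + 1)
          = (1/3:ℝ)^(j+2) * ((3:ℝ)^m * (1/3:ℝ)^m) := by
            rw [show j + (m+1) + 1 = (j+2) + m by omega, pow_add]; ring
        _ = (1/3:ℝ)^(j+2) := by rw [hmm, mul_one]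
    rw [← hpow]; ring
  have htail_summable : Summable (fun j : ℕ => (3:ℝ)^m * (2 * bv (d (j + (m+1))) * (1/3:ℝ)^(j + (m+1) + 1))) :=
    (summable_nat_add_iff (m+1)).2 hsum
  have hR0 : 0 ≤ R := by
    apply tsum_nonneg
    intro j
    have := bv_nonneg (d (j + (m+1))); positivity
  have hR13 : R ≤ 1/3 := by
    rw [hR]
    calc ∑' j : ℕ, (3:ℝ)^m * (2 * bv (d (j + (m+1))) * (1/3:ℝ)^(j + (m+1) + 1))
        ≤ ∑' j : ℕ, 2 * (1/3:ℝ)^(j+2) := by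
          apply Summable.tsum_le_tsum ?_ htail_summable ninth_summable
          intro j
          rw [htail_eq j]
          nlinarith [bv_le_one (d (j + (m+1))), bv_nonneg (d (j + (m+1))),
            pow_pos (by norm_num : (0:ℝ)<1/3) (j+2)]
      _ = 1/3 := ninth_tsum
  have hdecomp : (3:ℝ)^m * par d = 2 * (K:ℝ) + (2 * bv (d m) / 3 + R) := by
    rw [hmul, hsplit, hhead]
    ring
  cases hb : d m with
  | false =>
    have hd : (3:ℝ)^m * par d = 2 * (K:ℝ) + R := by
      rw [hdecomp, hb]; simp [bv]
    rw [hd, p_of_le K R hR0 hR13]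
    simp [bv]
  | true =>
    have hd : (3:ℝ)^m * par d = 2 * (K:ℝ) + (2/3 + R) := by
      rw [hdecomp, hb]; simp [bv]
    rw [hd, p_of_ge K (2/3 + R) (by linarith) (by linarith)]
    simp [bv]


/-! ### the two coordinate functions and assembly -/

noncomputable def X : ℝ → ℝ := Z (fun i => 2*i)
noncomputable def Y : ℝ → ℝ := Z (fun i => 2*i+1)

/-- interleaving of two digit streams -/
def il (a b : ℕ → Bool) (k : ℕ) : Bool := if k % 2 = 0 then a (k/2) else b (k/2)

lemma il_even (a b : ℕ → Bool) (m : ℕ) : il a b (2*m) = a m := by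
  simp [il, Nat.mul_mod_right, Nat.mul_div_cancel_left _ (by norm_num : 0 < 2)]

lemma il_odd (a b : ℕ → Bool) (m : ℕ) : il a b (2*m+1) = b m := by
  have h1 : (2*m+1) % 2 = 1 := by omega
  have h2 : (2*m+1) / 2 = m := by omega
  simp [il, h1, h2]

lemma Z_par_eval (e : ℕ → ℕ) (d : ℕ → Bool) :
    Z e (par d) = ∑' i : ℕ, (1/2:ℝ)^(i+1) * bv (d (e i)) :=
  tsum_congr fun i => by rw [p_par]

lemma X_par_il {s : ℝ} (hs : s ∈ Icc (0:ℝ) 1) (b : ℕ → Bool) :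
    X (par (il (bdig s) b)) = s := by
  rw [X, Z_par_eval]
  calc ∑' i : ℕ, (1/2:ℝ)^(i+1) * bv (il (bdig s) b (2*i))
      = ∑' i : ℕ, bv (bdig s i) * (1/2:ℝ)^(i+1) :=
        tsum_congr fun i => by rw [il_even]; ring
    _ = s := (bdig_hasSum hs).tsum_eq

lemma Y_par_il {t : ℝ} (ht : t ∈ Icc (0:ℝ) 1) (a : ℕ → Bool) :
    Y (par (il a (bdig t))) = t := by
  rw [Y, Z_par_eval]
  calc ∑' i : ℕ, (1/2:ℝ)^(i+1) * bv (il a (bdig t) (2*i+1))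
      = ∑' i : ℕ, bv (bdig t i) * (1/2:ℝ)^(i+1) :=
        tsum_congr fun i => by rw [il_odd]; ring
    _ = t := (bdig_hasSum ht).tsum_eq

lemma X_zero : X 0 = 0 := Z_zero _
lemma X_one : X 1 = 1 := Z_one _
lemma Y_zero : Y 0 = 0 := Z_zero _
lemma Y_one : Y 1 = 1 := Z_one _
lemma continuous_X : Continuous X := continuous_Z _
lemma continuous_Y : Continuous Y := continuous_Z _
lemma X_mem (t : ℝ) : X t ∈ Icc (0:ℝ) 1 := ⟨Z_nonneg _ t, Z_le_one _ t⟩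
lemma Y_mem (t : ℝ) : Y t ∈ Icc (0:ℝ) 1 := ⟨Z_nonneg _ t, Z_le_one _ t⟩

/-- the digit stream of `y/2` is not all ones -/
lemma bdig_half_exists_false {y : ℝ} (hy : y ∈ Icc (0:ℝ) 1) :
    ∃ j, bdig (y/2) j = false := by
  by_contra hc
  push_neg at hc
  have hall : ∀ j, bdig (y/2) j = true := fun j => by
    cases h : bdig (y/2) j
    · exact absurd h (hc j)
    · rfl
  have h1 : HasSum (fun k : ℕ => (1/2:ℝ)^(k+1)) (y/2) := by
    have h0 := bdig_hasSum (x := y/2) ⟨by linarith [hy.1], by linarith [hy.2]⟩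
    have he : (fun k : ℕ => bv (bdig (y/2) k) * (1/2:ℝ)^(k+1))
        = fun k : ℕ => (1/2:ℝ)^(k+1) := funext fun k => by rw [hall k]; simp [bv]
    rwa [he] at h0
  have h2 : HasSum (fun k : ℕ => (1/2:ℝ)^(k+1)) 1 := by
    have := half_summable.hasSum
    rwa [half_tsum] at this
  have := h1.unique h2
  linarith [hy.2]

/-- first coordinate map (at scale `n`) -/
noncomputable def f0 (n : ℕ) (t : ℝ) : ℝ :=
  t + (X (Int.fract ((n:ℝ)*t)) - Int.fract ((n:ℝ)*t)) / n

/-- second coordinate map (at scale `n`) -/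
noncomputable def f1 (n : ℕ) (t : ℝ) : ℝ :=
  1 - |2 * Y (Int.fract ((n:ℝ)*t)) - 1|

lemma continuous_f0 (n : ℕ) : Continuous (f0 n) := by
  unfold f0
  have hg : Continuous ((fun v => X v - v) ∘ Int.fract) := by
    apply ContinuousOn.comp_fract'' (continuous_X.sub continuous_id).continuousOn
    simp [X_zero, X_one]
  exact continuous_id.add ((hg.comp (continuous_const.mul continuous_id)).div_const n)

lemma continuous_f1 (n : ℕ) : Continuous (f1 n) := by
  unfold f1
  have hg : Continuous ((fun v => 1 - |2 * Y v - 1|) ∘ Int.fract) := by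
    apply ContinuousOn.comp_fract''
      (continuous_const.sub (continuous_const.mul continuous_Y |>.sub continuous_const).abs).continuousOn
    show (1:ℝ) - |2 * Y 0 - 1| = 1 - |2 * Y 1 - 1|
    rw [Y_zero, Y_one]
    norm_num
  exact hg.comp (continuous_const.mul continuous_id)

lemma f0_mem {n : ℕ} (hn : 1 ≤ n) {t : ℝ} (ht : t ∈ Icc (0:ℝ) 1) :
    f0 n t ∈ Icc (0:ℝ) 1 := by
  have hnpos : (0:ℝ) < n := by exact_mod_cast hn
  set s : ℝ := (n:ℝ) * t with hs
  have hfr : Int.fract s = s - ⌊s⌋ := Int.self_sub_floor s ▸ rfl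
  have hform : f0 n t = ((⌊s⌋ : ℝ) + X (Int.fract s)) / n := by
    rw [f0, ← hs, show ((⌊s⌋:ℝ)) = s - Int.fract s from by rw [hfr]; ring]
    rw [hs]
    field_simp
    linarith [Int.self_sub_floor (t*(n:ℝ)), Int.self_sub_floor ((n:ℝ)*t)]
  have hs0 : 0 ≤ s := mul_nonneg hnpos.le ht.1
  have hsn : s ≤ n := by
    calc s = (n:ℝ) * t := hs
      _ ≤ (n:ℝ) * 1 := by nlinarith [ht.2]
      _ = n := by ring
  have hfl0 : (0:ℤ) ≤ ⌊s⌋ := Int.floor_nonneg.2 hs0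
  rw [hform]
  constructor
  · apply div_nonneg _ hnpos.le
    have := (X_mem (Int.fract s)).1
    have : (0:ℝ) ≤ (⌊s⌋:ℝ) := by exact_mod_cast hfl0
    linarith [(X_mem (Int.fract s)).1]
  · rcases le_or_gt ((⌊s⌋:ℝ) + 1) n with h | h
    · rw [div_le_one hnpos]
      linarith [(X_mem (Int.fract s)).2]
    · -- then ⌊s⌋ = n and s = n, fract = 0
      have h1 : (n:ℝ) ≤ ⌊s⌋ := by
        have hz : (n:ℤ) < ⌊s⌋ + 1 := by exact_mod_cast h
        have : (n:ℤ) ≤ ⌊s⌋ := by omega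
        exact_mod_cast this
      have h2 : (⌊s⌋:ℝ) ≤ s := Int.floor_le s
      have hsn' : s = n := le_antisymm hsn (by linarith)
      have hfl : (⌊s⌋:ℝ) = s := le_antisymm h2 (by linarith)
      have : Int.fract s = 0 := by rw [hfr, hfl]; ring
      rw [this, X_zero, hfl, hsn', add_zero, div_self hnpos.ne']

lemma f1_mem (n : ℕ) (t : ℝ) : f1 n t ∈ Icc (0:ℝ) 1 := by
  obtain ⟨h0, h1⟩ := Y_mem (Int.fract ((n:ℝ)*t))
  rw [f1]
  constructor
  · have : |2 * Y (Int.fract ((n:ℝ)*t)) - 1| ≤ 1 := abs_le.2 ⟨by linarith, by linarith⟩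
    linarith
  · have : (0:ℝ) ≤ |2 * Y (Int.fract ((n:ℝ)*t)) - 1| := abs_nonneg _
    linarith

/-! ### the section `G` -/

noncomputable def kk (n : ℕ) (x : ℝ) : ℤ := min ⌊(n:ℝ)*x⌋ ((n:ℤ)-1)
noncomputable def ss (n : ℕ) (x : ℝ) : ℝ := (n:ℝ)*x - kk n x
noncomputable def uu (n : ℕ) (x y : ℝ) : ℝ := par (il (bdig (ss n x)) (bdig (y/2)))
noncomputable def gg (n : ℕ) (x y : ℝ) : ℝ := ((kk n x : ℝ) + uu n x y)/n

variable {n : ℕ} {x y : ℝ}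

lemma kk_nonneg (hn : 1 ≤ n) (hx : 0 ≤ x) : (0:ℤ) ≤ kk n x := by
  apply le_min
  · exact Int.floor_nonneg.2 (by positivity)
  · omega

lemma kk_le_floor : kk n x ≤ ⌊(n:ℝ)*x⌋ := min_le_left _ _

lemma kk_le_nx : (kk n x : ℝ) ≤ (n:ℝ)*x := by
  calc (kk n x : ℝ) ≤ (⌊(n:ℝ)*x⌋ : ℝ) := by exact_mod_cast kk_le_floor
    _ ≤ (n:ℝ)*x := Int.floor_le _

lemma nx_le_kk (hx : x ≤ 1) : (n:ℝ)*x ≤ (kk n x : ℝ) + 1 := by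
  rcases min_cases ⌊(n:ℝ)*x⌋ ((n:ℤ)-1) with ⟨h1, _⟩ | ⟨h1, _⟩
  · rw [kk, h1]
    linarith [Int.lt_floor_add_one ((n:ℝ)*x)]
  · rw [kk, h1]
    push_cast
    nlinarith [Nat.cast_nonneg (α := ℝ) n]

lemma ss_mem (hx : x ∈ Icc (0:ℝ) 1) : ss n x ∈ Icc (0:ℝ) 1 := by
  constructor
  · rw [ss]; linarith [kk_le_nx (n := n) (x := x)]
  · rw [ss]; linarith [nx_le_kk (n := n) hx.2]

lemma uu_nonneg : 0 ≤ uu n x y := par_nonneg _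

lemma uu_lt_one (hy : y ∈ Icc (0:ℝ) 1) : uu n x y < 1 := by
  obtain ⟨j, hj⟩ := bdig_half_exists_false hy
  exact par_lt_one (2*j+1) (by rw [il_odd]; exact hj)

lemma kk_le_n_sub_one : kk n x ≤ (n:ℤ) - 1 := min_le_right _ _

lemma gg_mem (hn : 1 ≤ n) (hx : x ∈ Icc (0:ℝ) 1) (hy : y ∈ Icc (0:ℝ) 1) :
    gg n x y ∈ Icc (0:ℝ) 1 := by
  have hnR : (0:ℝ) < n := by exact_mod_cast hn
  have h0 : (0:ℝ) ≤ (kk n x : ℝ) := by exact_mod_cast kk_nonneg hn hx.1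
  have h1 : (kk n x : ℝ) ≤ (n:ℝ) - 1 := by
    have := kk_le_n_sub_one (n := n) (x := x)
    have : ((kk n x : ℤ) : ℝ) ≤ (((n:ℤ) - 1 : ℤ) : ℝ) := by exact_mod_cast this
    push_cast at this
    linarith
  constructor
  · apply div_nonneg _ hnR.le
    linarith [uu_nonneg (n := n) (x := x) (y := y)]
  · rw [gg, div_le_one hnR]
    linarith [(uu_lt_one (n := n) (x := x) hy).le]

lemma nz_eq (hn : 1 ≤ n) : (n:ℝ) * gg n x y = (kk n x : ℝ) + uu n x y := by
  have hnR : (0:ℝ) < n := by exact_mod_cast hn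
  rw [gg]
  field_simp

lemma fract_nz (hn : 1 ≤ n) (hy : y ∈ Icc (0:ℝ) 1) :
    Int.fract ((n:ℝ) * gg n x y) = uu n x y := by
  rw [nz_eq hn, Int.fract_intCast_add,
    Int.fract_eq_self.2 ⟨uu_nonneg, uu_lt_one hy⟩]

lemma f0_gg (hn : 1 ≤ n) (hx : x ∈ Icc (0:ℝ) 1) (hy : y ∈ Icc (0:ℝ) 1) :
    f0 n (gg n x y) = x := by
  have hnR : (0:ℝ) < n := by exact_mod_cast hn
  rw [f0, fract_nz hn hy]
  rw [show X (uu n x y) = ss n x from X_par_il (ss_mem hx) _]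
  rw [gg, ss]
  field_simp
  ring

lemma f1_gg (hn : 1 ≤ n) (hy : y ∈ Icc (0:ℝ) 1) :
    f1 n (gg n x y) = y := by
  rw [f1, fract_nz hn hy]
  rw [show Y (uu n x y) = y/2 from
    Y_par_il ⟨by linarith [hy.1], by linarith [hy.2]⟩ _]
  rw [show 2 * (y/2) - 1 = y - 1 by ring, abs_of_nonpos (by linarith [hy.2] : y - 1 ≤ 0)]
  ring

lemma gg_close (hn : 1 ≤ n) (hx : x ∈ Icc (0:ℝ) 1) (hy : y ∈ Icc (0:ℝ) 1) :
    |gg n x y - x| ≤ 1/n := by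
  have hnR : (0:ℝ) < n := by exact_mod_cast hn
  have hA : gg n x y - x = ((kk n x : ℝ) + uu n x y - (n:ℝ)*x)/n := by
    rw [gg]; field_simp
  rw [hA, abs_div, abs_of_pos hnR]
  have habs : |(kk n x : ℝ) + uu n x y - (n:ℝ)*x| ≤ 1 := by
    rw [abs_le]
    constructor
    · linarith [nx_le_kk (n := n) hx.2, uu_nonneg (n := n) (x := x) (y := y)]
    · linarith [kk_le_nx (n := n) (x := x), (uu_lt_one (n := n) (x := x) hy).le]
  exact (div_le_div_iff_of_pos_right hnR).2 habs

end SFC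

theorem exists_injective_binary_ops_small_jump :
    ∀ ε : ℝ, 0 < ε →
      ∃ (G : (Set.Icc (0:ℝ) 1) × (Set.Icc (0:ℝ) 1) → Set.Icc (0:ℝ) 1)
        (F₀ F₁ : (Set.Icc (0:ℝ) 1) → Set.Icc (0:ℝ) 1),
        Continuous F₀ ∧ Continuous F₁ ∧
        (∀ x₀ x₁, F₀ (G (x₀, x₁)) = x₀) ∧
        (∀ x₀ x₁, F₁ (G (x₀, x₁)) = x₁) ∧
        jump G ≤ ENNReal.ofReal ε := by
  intro ε hε
  set n : ℕ := ⌈4/ε⌉₊ with hn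
  have hn4 : 4/ε ≤ (n:ℝ) := Nat.le_ceil _
  have hn1 : 1 ≤ n := Nat.ceil_pos.2 (by positivity)
  have hnR : (0:ℝ) < n := by exact_mod_cast hn1
  have hinv : 1/(n:ℝ) ≤ ε/4 := by
    rw [div_le_div_iff₀ hnR (by norm_num)]
    have h4 : 4 ≤ (n:ℝ) * ε := by
      have := (div_le_iff₀ hε).1 hn4
      linarith
    linarith
  refine ⟨fun q => ⟨SFC.gg n q.1.1 q.2.1, SFC.gg_mem hn1 q.1.2 q.2.2⟩,
    fun z => ⟨SFC.f0 n z.1, SFC.f0_mem hn1 z.2⟩,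
    fun z => ⟨SFC.f1 n z.1, SFC.f1_mem n z.1⟩, ?_, ?_, ?_, ?_, ?_⟩
  · exact Continuous.subtype_mk ((SFC.continuous_f0 n).comp continuous_subtype_val) _
  · exact Continuous.subtype_mk ((SFC.continuous_f1 n).comp continuous_subtype_val) _
  · intro x₀ x₁
    exact Subtype.ext (SFC.f0_gg hn1 x₀.2 x₁.2)
  · intro x₀ x₁
    exact Subtype.ext (SFC.f1_gg hn1 x₁.2)
  · rw [jump]
    apply iSup_le
    intro b
    set G : (Set.Icc (0:ℝ) 1) × (Set.Icc (0:ℝ) 1) → Set.Icc (0:ℝ) 1 :=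
      fun q => ⟨SFC.gg n q.1.1 q.2.1, SFC.gg_mem hn1 q.1.2 q.2.2⟩ with hG
    set U : Set ((Set.Icc (0:ℝ) 1) × (Set.Icc (0:ℝ) 1)) :=
      Prod.fst ⁻¹' (Metric.ball b.1 (ε/4)) with hU
    have hUopen : IsOpen U := Metric.isOpen_ball.preimage continuous_fst
    have hbU : b ∈ U := by
      simp only [hU, Set.mem_preimage, Metric.mem_ball, dist_self]
      positivity
    calc jumpAt G b ≤ EMetric.diam (G '' U) := by
          rw [jumpAt]
          exact iInf_le_of_le U (iInf_le_of_le hUopen (iInf_le _ hbU))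
      _ ≤ ENNReal.ofReal ε := by
          apply EMetric.diam_le
          rintro _ ⟨a, ha, rfl⟩ _ ⟨c, hc, rfl⟩
          rw [edist_dist]
          apply ENNReal.ofReal_le_ofReal
          have da : dist a.1 b.1 < ε/4 := ha
          have dc : dist c.1 b.1 < ε/4 := hc
          have da' : |a.1.1 - b.1.1| < ε/4 := by
            rwa [Subtype.dist_eq, Real.dist_eq] at da
          have dc' : |c.1.1 - b.1.1| < ε/4 := by
            rwa [Subtype.dist_eq, Real.dist_eq] at dc
          have hga := SFC.gg_close (x := a.1.1) (y := a.2.1) hn1 a.1.2 a.2.2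
          have hgc := SFC.gg_close (x := c.1.1) (y := c.2.1) hn1 c.1.2 c.2.2
          rw [Subtype.dist_eq, Real.dist_eq]
          simp only [hG]
          have h1 := abs_sub_abs_le_abs_sub (SFC.gg n a.1.1 a.2.1) (SFC.gg n c.1.1 c.2.1)
          have key : |SFC.gg n a.1.1 a.2.1 - SFC.gg n c.1.1 c.2.1| ≤
              |SFC.gg n a.1.1 a.2.1 - a.1.1| + |a.1.1 - b.1.1| + |b.1.1 - c.1.1|
              + |c.1.1 - SFC.gg n c.1.1 c.2.1| := by
            have := abs_sub_le (SFC.gg n a.1.1 a.2.1) a.1.1 (SFC.gg n c.1.1 c.2.1)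
            have h2 := abs_sub_le (a.1.1 : ℝ) b.1.1 (SFC.gg n c.1.1 c.2.1)
            have h3 := abs_sub_le (b.1.1 : ℝ) c.1.1 (SFC.gg n c.1.1 c.2.1)
            linarith
          have hb1 : |b.1.1 - c.1.1| < ε/4 := by rw [abs_sub_comm]; exact dc'
          have hc1 : |c.1.1 - SFC.gg n c.1.1 c.2.1| ≤ 1/n := by
            rw [abs_sub_comm]; exact hgc
          linarith
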